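/- Let n ≥ 2 be a natural number and let λ be a real number with 0 ≤ λ < 1/(n−1) (so that 1 − n·λ/2 > 0). For d ∈ {0, 1, …, n−1} define a(d) = 1 + λ·d/(1 − n·λ/2). Then a satisfies the system of interim best responses under the uniform prior over all graphs on n vertices: for every d ∈ {0, 1, …, n−1}, a(d) = 1 + λ·d·(1/2^(n−2))·∑_{d'=1}^{n−1} C(n−2, d'−1)·a(d'). (Hence under the uniform prior, the Bayesian–Nash equilibrium action of an agent of degree d in the realized network is 1 + λd/(1 − nλ/2).) -/

import Mathlib

lemma aux_sum (m : ℕ) : 2 * ∑ k ∈ Finset.range (m+1), ((k:ℝ)+1) * (m.choose k)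
    = ((m:ℝ)+2) * 2^m := by
  have hrefl := Finset.sum_range_reflect (fun k => ((k:ℝ)+1) * (m.choose k)) (m+1)
  have h1 : ∑ k ∈ Finset.range (m+1), (((m + 1 - 1 - k : ℕ):ℝ)+1) * (m.choose (m + 1 - 1 - k))
      = ∑ k ∈ Finset.range (m+1), (((m:ℝ) - k)+1) * (m.choose k) := by
    apply Finset.sum_congr rfl
    intro k hk
    have hk' : k ≤ m := Nat.lt_succ_iff.mp (Finset.mem_range.mp hk)
    have : m + 1 - 1 - k = m - k := by omega
    rw [this, Nat.choose_symm hk', Nat.cast_sub hk']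
  have h2 : ∑ k ∈ Finset.range (m+1), (((m:ℝ) - k)+1) * (m.choose k)
      + ∑ k ∈ Finset.range (m+1), ((k:ℝ)+1) * (m.choose k)
      = ∑ k ∈ Finset.range (m+1), ((m:ℝ)+2) * (m.choose k) := by
    rw [← Finset.sum_add_distrib]
    apply Finset.sum_congr rfl
    intro k _; ring
  have h3 : ∑ k ∈ Finset.range (m+1), ((m:ℝ)+2) * (m.choose k) = ((m:ℝ)+2) * 2^m := by
    rw [← Finset.mul_sum]
    congr 1
    rw [← Nat.cast_sum, Nat.sum_range_choose]
    push_cast; ring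
  rw [h1] at hrefl
  linarith

theorem stmt_12 (n : ℕ) (hn : 2 ≤ n)
    (lam : ℝ) (hlam0 : 0 ≤ lam) (hlam1 : lam < 1 / ((n : ℝ) - 1))
    (a : ℕ → ℝ)
    (ha : ∀ d, a d = 1 + lam * (d : ℝ) / (1 - (n : ℝ) * lam / 2)) :
    ∀ d ∈ Finset.range n,
      a d = 1 + lam * (d : ℝ) * (1 / 2 ^ (n - 2)) *
        ∑ d' ∈ Finset.Icc 1 (n - 1), ((n - 2).choose (d' - 1) : ℝ) * a d' := by
  obtain ⟨m, rfl⟩ : ∃ m, n = m + 2 := ⟨n - 2, by omega⟩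
  intro d _
  -- positivity of denominator
  have hm1 : (0:ℝ) < (m:ℝ) + 1 := by positivity
  have hlam1' : lam * ((m:ℝ)+1) < 1 := by
    have : lam < 1 / ((m:ℝ)+1) := by
      convert hlam1 using 2
      push_cast; ring
    calc lam * ((m:ℝ)+1) < (1 / ((m:ℝ)+1)) * ((m:ℝ)+1) := by
          exact mul_lt_mul_of_pos_right this hm1
      _ = 1 := by field_simp
  have hD : (0:ℝ) < 1 - ((m:ℕ)+2 : ℝ) * lam / 2 := by
    have hlm : 0 ≤ lam * (m:ℝ) := by positivity
    nlinarith
  set D : ℝ := 1 - ((m:ℕ)+2 : ℝ) * lam / 2 with hDdef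
  have hDcast : (1 - ((m+2:ℕ):ℝ) * lam / 2) = D := by push_cast [hDdef]; ring
  have hsimp : m + 2 - 2 = m := by omega
  have hsimp1 : m + 2 - 1 = m + 1 := by omega
  rw [hsimp, hsimp1]
  -- rewrite sum over Icc as sum over range
  have hIcc : ∑ d' ∈ Finset.Icc 1 (m+1), ((m.choose (d'-1)) : ℝ) * a d'
      = ∑ k ∈ Finset.range (m+1), ((m.choose k) : ℝ) * a (k+1) := by
    rw [← Finset.Ico_add_one_right_eq_Icc, Finset.sum_Ico_eq_sum_range]
    apply Finset.sum_congr (by norm_num)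
    intro k _
    have h1 : 1 + k - 1 = k := by omega
    rw [h1, add_comm 1 k]
  rw [hIcc]
  have hsum : ∑ k ∈ Finset.range (m+1), ((m.choose k) : ℝ) * a (k+1)
      = (2:ℝ)^m + (lam / D) * (((m:ℝ)+2) * 2^m / 2) := by
    have : ∀ k, a (k+1) = 1 + lam * ((k:ℝ)+1) / D := by
      intro k
      rw [ha (k+1), hDcast]
      push_cast; ring
    calc ∑ k ∈ Finset.range (m+1), ((m.choose k) : ℝ) * a (k+1)
        = ∑ k ∈ Finset.range (m+1), (((m.choose k) : ℝ) + (lam / D) * (((k:ℝ)+1) * (m.choose k))) := by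
          apply Finset.sum_congr rfl
          intro k _
          rw [this k]
          field_simp
      _ = (2:ℝ)^m + (lam / D) * ∑ k ∈ Finset.range (m+1), ((k:ℝ)+1) * (m.choose k) := by
          rw [Finset.sum_add_distrib, ← Finset.mul_sum, ← Nat.cast_sum, Nat.sum_range_choose]
          push_cast; ring
      _ = (2:ℝ)^m + (lam / D) * (((m:ℝ)+2) * 2^m / 2) := by
          have h := aux_sum m
          have he : ∑ k ∈ Finset.range (m+1), ((k:ℝ)+1) * (m.choose k) = ((m:ℝ)+2) * 2^m / 2 := by
            linarith
          rw [he]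
  rw [hsum, ha d, hDcast]
  have h2m : (2:ℝ)^m ≠ 0 := by positivity
  have hDne : D ≠ 0 := ne_of_gt hD
  have hcast : ((m+2:ℕ):ℝ) = (m:ℝ) + 2 := by push_cast; ring
  rw [hcast] at *
  field_simp
  ring
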